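/- Let R be a Euclidean domain and > a global monomial ordering on the monomials of R[x₁,…,xₙ]. Let h, k ∈ R[x₁,…,xₙ] be nonzero polynomials such that LM(k) divides LM(h), and let r := LC(h) mod LC(k) be the remainder of LC(h) upon division by LC(k) in R, with r ≠ LC(h). Set h' := h + ((r − LC(h))/LC(k))·(LM(h)/LM(k))·k. Then h' ≡ h modulo the ideal ⟨k⟩, the coefficient of the monomial LM(h) in h' equals r, and LM(h') ≤ LM(h), with LM(h') = LM(h) exactly when r ≠ 0. -/

import Mathlib

open MvPolynomial

variable {n : ℕ} {R : Type*} [EuclideanDomain R]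

/-- The leading exponent of a polynomial w.r.t. a monomial order (leading exponent of 0 is 0). -/
noncomputable def leadExp (m : MonomialOrder (Fin n)) (f : MvPolynomial (Fin n) R) :
    Fin n →₀ ℕ :=
  m.toSyn.symm (f.support.sup fun d => m.toSyn d)

/-- The leading coefficient. -/
noncomputable def leadCoeff (m : MonomialOrder (Fin n)) (f : MvPolynomial (Fin n) R) : R :=
  f.coeff (leadExp m f)

/-- The leading term. -/
noncomputable def leadTerm (m : MonomialOrder (Fin n)) (f : MvPolynomial (Fin n) R) :
    MvPolynomial (Fin n) R :=
  monomial (leadExp m f) (leadCoeff m f)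

/-- The leading monomial, as an element of `WithBot m.syn`; `leadMon m 0 = ⊥`. -/
noncomputable def leadMon (m : MonomialOrder (Fin n)) (f : MvPolynomial (Fin n) R) :
    WithBot m.syn :=
  f.support.sup fun d => (m.toSyn d : WithBot m.syn)

/-- The leading ideal of a set of polynomials. -/
noncomputable def leadIdeal (m : MonomialOrder (Fin n)) (S : Set (MvPolynomial (Fin n) R)) :
    Ideal (MvPolynomial (Fin n) R) :=
  Ideal.span (leadTerm m '' S)

/-- The S-polynomial. -/
noncomputable def spoly [DecidableEq R] (m : MonomialOrder (Fin n))
    (f g : MvPolynomial (Fin n) R) : MvPolynomial (Fin n) R :=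
  monomial (leadExp m f ⊔ leadExp m g - leadExp m f)
      (EuclideanDomain.lcm (leadCoeff m f) (leadCoeff m g) / leadCoeff m f) * f -
    monomial (leadExp m f ⊔ leadExp m g - leadExp m g)
      (EuclideanDomain.lcm (leadCoeff m f) (leadCoeff m g) / leadCoeff m g) * g


section Aux
variable {n : ℕ} {R : Type*} [EuclideanDomain R]

lemma toSyn_leadExp (m : MonomialOrder (Fin n)) (f : MvPolynomial (Fin n) R) :
    m.toSyn (leadExp m f) = f.support.sup fun d => m.toSyn d := by
  simp [leadExp]

lemma le_toSyn_leadExp (m : MonomialOrder (Fin n)) {f : MvPolynomial (Fin n) R}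
    {d : Fin n →₀ ℕ} (hd : d ∈ f.support) : m.toSyn d ≤ m.toSyn (leadExp m f) := by
  rw [toSyn_leadExp]; exact Finset.le_sup hd

lemma leadExp_mem_support (m : MonomialOrder (Fin n)) {f : MvPolynomial (Fin n) R}
    (hf : f ≠ 0) : leadExp m f ∈ f.support := by
  obtain ⟨d, hd, he⟩ := Finset.exists_mem_eq_sup f.support
    (Finset.nonempty_iff_ne_empty.2 (mt MvPolynomial.support_eq_empty.1 hf)) (fun d => m.toSyn d)
  have : leadExp m f = d := by simp [leadExp, he]
  rwa [this]

lemma leadCoeff_ne_zero (m : MonomialOrder (Fin n)) {f : MvPolynomial (Fin n) R}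
    (hf : f ≠ 0) : leadCoeff m f ≠ 0 :=
  MvPolynomial.mem_support_iff.1 (leadExp_mem_support m hf)

end Aux

/-- One remainder step in `Interreduce`: if `h, k` are nonzero with `LM k ∣ LM h`, and
`r = LC h mod LC k` satisfies `r ≠ LC h`, then for
`h' = h + ((r - LC h)/LC k) * (LM h / LM k) * k` we have `h' ≡ h` modulo `⟨k⟩`,
the coefficient of `LM h` in `h'` equals `r`, and `LM h' ≤ LM h` with equality
exactly when `r ≠ 0`. -/
theorem interreduce_step_mod
    {n : ℕ} {R : Type*} [EuclideanDomain R]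
    (m : MonomialOrder (Fin n))
    (h k : MvPolynomial (Fin n) R)
    (hh0 : h ≠ 0) (hk0 : k ≠ 0)
    (hdvd : leadExp m k ≤ leadExp m h)
    (r : R) (hr : r = leadCoeff m h % leadCoeff m k) (hrne : r ≠ leadCoeff m h)
    (h' : MvPolynomial (Fin n) R)
    (hh' : h' = h + C ((r - leadCoeff m h) / leadCoeff m k) *
      monomial (leadExp m h - leadExp m k) 1 * k) :
    h' - h ∈ Ideal.span ({k} : Set (MvPolynomial (Fin n) R)) ∧
    h'.coeff (leadExp m h) = r ∧
    leadMon m h' ≤ leadMon m h ∧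
    (leadMon m h' = leadMon m h ↔ r ≠ 0) := by

  classical
  set e := leadExp m h with he
  set ek := leadExp m k with hek
  set c := (r - leadCoeff m h) / leadCoeff m k with hc
  set g : MvPolynomial (Fin n) R := C c * monomial (e - ek) 1 * k with hg
  have hlck : leadCoeff m k ≠ 0 := leadCoeff_ne_zero m hk0
  have hadd : e - ek + ek = e := tsub_add_cancel_of_le hdvd
  have hdvdc : leadCoeff m k ∣ (r - leadCoeff m h) := by
    rw [hr]
    have := EuclideanDomain.div_add_mod (leadCoeff m h) (leadCoeff m k)
    have : leadCoeff m h % leadCoeff m k - leadCoeff m h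
        = -(leadCoeff m k * (leadCoeff m h / leadCoeff m k)) := by linear_combination this
    rw [this]
    exact (Dvd.intro _ rfl).neg_right
  have hcc : c * leadCoeff m k = r - leadCoeff m h := by
    rw [hc, mul_comm]
    exact EuclideanDomain.mul_div_cancel' hlck hdvdc
  -- the monomial form of g
  have hgm : g = monomial (e - ek) c * k := by
    rw [hg, MvPolynomial.C_mul_monomial, mul_one]
  -- coefficient of e in g
  have hcoeffg : g.coeff e = r - leadCoeff m h := by
    have hmm := MvPolynomial.coeff_monomial_mul ek (e - ek) c k
    rw [hadd] at hmm
    rw [hgm, hmm]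
    exact hcc
  -- Part 2
  have part2 : h'.coeff e = r := by
    rw [hh']
    rw [MvPolynomial.coeff_add]
    have : (C c * monomial (e - ek) 1 * k).coeff e = r - leadCoeff m h := hcoeffg
    rw [this]
    simp [leadCoeff, ← he]
  -- support bound for g
  have hgbound : ∀ d ∈ g.support, m.toSyn d ≤ m.toSyn e ∧ (d ≠ e → m.toSyn d < m.toSyn e) := by
    intro d hd
    rw [hgm] at hd
    have := MvPolynomial.support_mul _ k hd
    rw [Finset.mem_add] at this
    obtain ⟨a, ha, b, hb, rfl⟩ := this
    have ha' : a = e - ek := by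
      have := MvPolynomial.support_monomial_subset ha
      simpa using this
    subst ha'
    have hble : m.toSyn b ≤ m.toSyn ek := le_toSyn_leadExp m hb
    constructor
    · calc m.toSyn (e - ek + b) = m.toSyn (e - ek) + m.toSyn b := by rw [map_add]
        _ ≤ m.toSyn (e - ek) + m.toSyn ek := by gcongr
        _ = m.toSyn e := by rw [← map_add, hadd]
    · intro hne
      have hbne : b ≠ ek := fun hbe => hne (by rw [hbe, hadd])
      have : m.toSyn b < m.toSyn ek :=
        lt_of_le_of_ne hble (fun hh => hbne (m.toSyn.injective hh))
      calc m.toSyn (e - ek + b) = m.toSyn (e - ek) + m.toSyn b := by rw [map_add]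
        _ < m.toSyn (e - ek) + m.toSyn ek := by gcongr
        _ = m.toSyn e := by rw [← map_add, hadd]
  -- support bound for h'
  have hbound : ∀ d ∈ h'.support, m.toSyn d ≤ m.toSyn e := by
    intro d hd
    rw [hh'] at hd
    have := Finsupp.support_add hd
    rw [Finset.mem_union] at this
    rcases this with hd | hd
    · exact le_toSyn_leadExp m hd
    · exact (hgbound d hd).1
  -- leadMon of h
  have hne : h.support.Nonempty := Finset.nonempty_iff_ne_empty.2 (mt MvPolynomial.support_eq_empty.1 hh0)
  have hmonh : leadMon m h = ((m.toSyn e : m.syn) : WithBot m.syn) := by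
    rw [leadMon]
    have h1 : (h.support.sup fun d => ((m.toSyn d : m.syn) : WithBot m.syn))
        = ((h.support.sup' hne fun d => m.toSyn d : m.syn) : WithBot m.syn) :=
      (Finset.coe_sup' hne _).symm
    rw [h1, Finset.sup'_eq_sup hne, ← toSyn_leadExp]
  refine ⟨?_, part2, ?_, ?_⟩
  · rw [hh']
    simp only [add_sub_cancel_left]
    rw [Ideal.mem_span_singleton]
    exact ⟨monomial (e - ek) c, by rw [hgm, mul_comm]⟩
  · rw [hmonh, leadMon]
    apply Finset.sup_le
    intro d hd
    exact_mod_cast hbound d hd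
  · constructor
    · intro heq hr0
      -- r = 0: show strict inequality
      have hstrict : ∀ d ∈ h'.support, (m.toSyn d : WithBot m.syn) < (m.toSyn e : WithBot m.syn) := by
        intro d hd
        have hde : d ≠ e := by
          intro hde
          apply MvPolynomial.mem_support_iff.1 hd
          rw [hde, part2, hr0]
        have hle := hbound d hd
        exact_mod_cast lt_of_le_of_ne hle (fun hh => hde (m.toSyn.injective hh))
      have : leadMon m h' < ((m.toSyn e : m.syn) : WithBot m.syn) := by
        rw [leadMon]
        exact Finset.sup_lt_iff (by exact WithBot.bot_lt_coe _) |>.2 hstrict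
      rw [heq, hmonh] at this
      exact lt_irrefl _ this
    · intro hr0
      have hmem : e ∈ h'.support := MvPolynomial.mem_support_iff.2 (by rw [part2]; exact hr0)
      rw [hmonh, leadMon]
      apply le_antisymm
      · apply Finset.sup_le
        intro d hd
        exact_mod_cast hbound d hd
      · exact Finset.le_sup (f := fun d => ((m.toSyn d : m.syn) : WithBot m.syn)) hmem
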